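/- Consider the natural linear action of SL(2,ℤ) on ℝ². Every continuous map from the orbit space ℝ²/SL(2,ℤ) (with the quotient topology) to a Hausdorff topological space is constant. Equivalently, every continuous SL(2,ℤ)-invariant map from ℝ² to a Hausdorff space is constant. (The paper states this for the space of complete affine structures on the 2-torus, which identifies with this quotient: it admits no nonconstant continuous mappings into any Hausdorff space.) -/

import Mathlib

/-- The linear action of `SL(2,ℤ)` on `ℝ²`. -/
def SL2ZAct (γ : Matrix.SpecialLinearGroup (Fin 2) ℤ) (v : Fin 2 → ℝ) : Fin 2 → ℝ :=
  ((γ : Matrix (Fin 2) (Fin 2) ℤ).map (Int.cast : ℤ → ℝ)).mulVec v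

def mkSL (a b c d : ℤ) (h : a * d - b * c = 1) : Matrix.SpecialLinearGroup (Fin 2) ℤ :=
  ⟨!![a, b; c, d], by rw [Matrix.det_fin_two_of]; linarith⟩

lemma act_apply (a b c d : ℤ) (h : a * d - b * c = 1) (v : Fin 2 → ℝ) :
    SL2ZAct (mkSL a b c d h) v = ![a * v 0 + b * v 1, c * v 0 + d * v 1] := by
  funext i
  fin_cases i <;>
    simp [SL2ZAct, mkSL, Matrix.mulVec, dotProduct, Fin.sum_univ_two]

lemma approx {ξ : ℝ} (hξ : Irrational ξ) {ε : ℝ} (hε : 0 < ε) :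
    ∃ r : ℚ, |(r.den : ℝ) * ξ - r.num| < ε := by
  obtain ⟨q₀, hq₀⟩ := exists_rat_near ξ (mul_pos hε hε)
  obtain ⟨r, h1, h2⟩ := Real.exists_rat_abs_sub_lt_and_lt_of_irrational hξ q₀
  refine ⟨r, ?_⟩
  have hd : (0:ℝ) < r.den := by exact_mod_cast r.pos
  have key : |(r.den : ℝ) * ξ - r.num| = r.den * |ξ - r| := by
    rw [show (r.den:ℝ) * ξ - r.num = (r.den:ℝ) * (ξ - r) by
        rw [Rat.cast_def]; field_simp, abs_mul, abs_of_pos hd]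
  rw [key]
  rcases le_or_gt (r.den : ℝ) (1/ε) with hle | hgt
  · calc (r.den : ℝ) * |ξ - r| < (1/ε) * (ε * ε) := by
          apply mul_lt_mul' hle (h2.trans hq₀) (abs_nonneg _) (one_div_pos.mpr hε)
       _ = ε := by field_simp
  · calc (r.den : ℝ) * |ξ - r| < r.den * (1 / (r.den : ℝ)^2) :=
          (mul_lt_mul_iff_right₀ hd).mpr h1
       _ = 1 / r.den := by field_simp
       _ < ε := by rw [div_lt_iff₀ hd]; rw [div_lt_iff₀ hε] at hgt; nlinarith

/-- Every continuous map from the orbit space `ℝ²/SL(2,ℤ)` (with the quotient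
topology) to a Hausdorff topological space is constant. -/
theorem continuous_map_from_R2_mod_SL2Z_constant
    {Z : Type*} [TopologicalSpace Z] [T2Space Z]
    (f : Quot (fun v w : Fin 2 → ℝ => ∃ γ, SL2ZAct γ v = w) → Z)
    (hf : Continuous f) :
    ∀ a b, f a = f b := by
  set α : ℝ := Real.sqrt 2 with hα
  have hirr : Irrational α := irrational_sqrt_two
  set g : (Fin 2 → ℝ) → Z := fun v => f (Quot.mk _ v) with hg_def
  have hg : Continuous g := hf.comp continuous_quot_mk
  have hinv : ∀ γ v, g (SL2ZAct γ v) = g v := by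
    intro γ v
    have : Quot.mk (fun v w : Fin 2 → ℝ => ∃ γ, SL2ZAct γ v = w) v
        = Quot.mk _ (SL2ZAct γ v) := Quot.sound ⟨γ, rfl⟩
    simp [hg_def, ← this]
  set v0 : Fin 2 → ℝ := ![1, α] with hv0def
  set c : Z := g v0 with hc
  set S : Set (Fin 2 → ℝ) := {v | g v = c} with hS
  have hScl : IsClosed S := isClosed_singleton.preimage hg
  have hSinv : ∀ γ v, v ∈ S → SL2ZAct γ v ∈ S := fun γ v hv => by
    simpa [hS, hinv γ v] using hv
  have hv0S : v0 ∈ S := rfl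
  -- Step 1: the x-axis is contained in S.
  have axis : ∀ x : ℝ, (![x, 0] : Fin 2 → ℝ) ∈ S := by
    intro x
    have : (![x, 0] : Fin 2 → ℝ) ∈ closure S := by
      rw [Metric.mem_closure_iff]
      intro ε hε
      obtain ⟨r, hr⟩ := approx hirr (half_pos hε)
      set p : ℤ := r.num
      set q : ℤ := (r.den : ℤ)
      have hq0 : (0:ℤ) < q := Int.natCast_pos.mpr r.pos
      set δ : ℝ := q * α - p with hδ
      have hδsmall : |δ| < ε/2 := by simpa [hδ, q] using hr
      have hδne : δ ≠ 0 := by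
        intro h0
        apply hirr.ne_rat (p / q)
        have hq0' : (q:ℝ) ≠ 0 := by exact_mod_cast hq0.ne'
        push_cast
        field_simp
        linarith [sub_eq_zero.mp h0]
      have hcop : IsCoprime q p := by
        rw [Int.isCoprime_iff_gcd_eq_one]
        simpa [Int.gcd, q, p] using r.reduced.symm
      obtain ⟨a, b, hab⟩ := hcop
      set t : ℤ := round ((a + b * α - x) / δ) with ht
      have hdet : (a + t * p) * q - (b - t * q) * (-p) = 1 := by linarith [hab]
      set γ := mkSL (a + t * p) (b - t * q) (-p) q hdet with hγ
      set w := SL2ZAct γ v0 with hw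
      have hwS : w ∈ S := hSinv γ v0 hv0S
      have hw0 : w 0 = (a + b * α) - t * δ := by
        rw [hw, hγ, act_apply]
        show ((a + t * p : ℤ) : ℝ) * v0 0 + ((b - t * q : ℤ) : ℝ) * v0 1
            = (a + b * α) - t * δ
        simp only [hv0def, hδ]
        push_cast
        show ((a:ℝ) + t * p) * 1 + ((b:ℝ) - t * q) * α = _
        ring
      have hw1 : w 1 = δ := by
        rw [hw, hγ, act_apply]
        show ((-p : ℤ) : ℝ) * v0 0 + ((q : ℤ) : ℝ) * v0 1 = δ
        simp only [hv0def, hδ]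
        push_cast
        show (-(p:ℝ)) * 1 + (q:ℝ) * α = _
        ring
      refine ⟨w, hwS, ?_⟩
      rw [dist_pi_lt_iff hε]
      intro i
      fin_cases i
      · show dist x (w 0) < ε
        rw [hw0, Real.dist_eq]
        have : x - ((a + b * α) - t * δ) = -δ * ((a + b * α - x) / δ - t) := by
          field_simp
          ring
        rw [this, abs_mul, abs_neg]
        calc |δ| * |((a + b * α - x) / δ - t)| ≤ |δ| * (1/2) := by
              apply mul_le_mul_of_nonneg_left _ (abs_nonneg _)
              rw [ht]
              exact abs_sub_round _
          _ < ε := by nlinarith [abs_nonneg δ, hδsmall]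
      · show dist (0:ℝ) (w 1) < ε
        rw [hw1, Real.dist_eq]
        rw [abs_sub_comm]
        simpa using hδsmall.trans (by linarith)
    rwa [hScl.closure_eq] at this
  -- Step 2: rays through coprime directions are in S.
  have ray : ∀ (p q : ℤ), IsCoprime p q → ∀ x : ℝ, (![p * x, q * x] : Fin 2 → ℝ) ∈ S := by
    intro p q hpq x
    obtain ⟨a, b, hab⟩ := hpq
    have hdet : p * a - (-b) * q = 1 := by linarith
    have := hSinv (mkSL p (-b) q a hdet) ![x, 0] (axis x)
    rw [act_apply] at this
    convert this using 2 <;> simp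
  -- Step 3: S is dense.
  have hdense : ∀ v : Fin 2 → ℝ, v ∈ S := by
    intro v
    have hcl : v ∈ closure S := by
      rw [Metric.mem_closure_iff]
      intro ε hε
      set y := v 0 with hy
      set z := v 1 with hz
      have hveq : v = ![y, z] := by
        funext i; fin_cases i <;> rfl
      rcases eq_or_ne y 0 with h0 | h0
      · refine ⟨![(0:ℤ) * z, (1:ℤ) * z], ray 0 1 (isCoprime_zero_left.mpr isUnit_one) z, ?_⟩
        rw [dist_pi_lt_iff hε]
        intro i
        fin_cases i
        · show dist (v 0) (((0:ℤ):ℝ) * z) < ε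
          simp [← hy, h0, hε]
        · show dist (v 1) (((1:ℤ):ℝ) * z) < ε
          simp [← hz, hε]
      · have hay : 0 < |y| := abs_pos.mpr h0
        obtain ⟨r, hrn⟩ := exists_rat_near (z / y) (div_pos hε hay)
        have hdp : (0:ℝ) < (r.den : ℝ) := by exact_mod_cast r.pos
        have hcop : IsCoprime (r.den : ℤ) r.num := by
          rw [Int.isCoprime_iff_gcd_eq_one]
          simpa [Int.gcd] using r.reduced.symm
        refine ⟨![((r.den:ℤ):ℝ) * (y / r.den), ((r.num:ℤ):ℝ) * (y / r.den)],
          ray _ _ hcop (y / r.den), ?_⟩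
        rw [dist_pi_lt_iff hε]
        intro i
        fin_cases i
        · show dist (v 0) (((r.den:ℤ):ℝ) * (y / r.den)) < ε
          have : ((r.den:ℤ):ℝ) * (y / r.den) = y := by
            field_simp
            norm_cast
          rw [this, ← hy]; simpa using hε
        · show dist (v 1) (((r.num:ℤ):ℝ) * (y / r.den)) < ε
          have heq : ((r.num:ℤ):ℝ) * (y / r.den) = y * (r : ℝ) := by
            rw [Rat.cast_def]; ring
          rw [heq, ← hz, Real.dist_eq]
          have : z - y * r = y * (z / y - r) := by field_simp
          rw [this, abs_mul]
          calc |y| * |z / y - (r:ℝ)| < |y| * (ε / |y|) := by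
                exact mul_lt_mul_of_pos_left hrn hay
            _ = ε := by field_simp
    rwa [hScl.closure_eq] at hcl
  -- Conclude.
  intro a b
  obtain ⟨va, rfl⟩ := Quot.exists_rep a
  obtain ⟨vb, rfl⟩ := Quot.exists_rep b
  have ha := hdense va
  have hb := hdense vb
  simp only [hS, Set.mem_setOf_eq, hg_def] at ha hb
  rw [ha, hb]
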